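/- Let Ω be a standard Borel space, P a probability measure on Ω, h : Ω → ℝ measurable, and g : ℝ → (0,∞) measurable with ∫ g(h(ω)) dP(ω) = 1, and let Q be the probability measure with density g ∘ h with respect to P. Then the regular conditional distributions given h coincide: for (Q ∘ h⁻¹)-almost every u ∈ ℝ, Q(· | h = u) = P(· | h = u). Consequently, for every measurable M : Ω → ℝ^d and every Borel set A ⊆ ℝ^d, Q{M ∈ A} = ∫_ℝ P{M ∈ A | h = u} (Q ∘ h⁻¹)(du); that is, the tilted (canonical-type) ensemble is a mixture of the conditioned (microcanonical-type) ensembles of the prior, weighted by the law of h under the tilted measure. -/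

import Mathlib

/-!
STATEMENT 13: A tilted (canonical-type) measure `Q = (g ∘ h) · P` (with `g > 0` and
`∫ g ∘ h dP = 1`) on a standard Borel space has the same regular conditional
distributions given `h` as the prior `P`: any disintegration kernels `κP` of `P` and
`κQ` of `Q` given `h` satisfy `κQ u = κP u` for `(Q ∘ h⁻¹)`-a.e. `u`; consequently, for
every measurable macrostate `M : Ω → ℝ^d` and Borel `A`,
`Q{M ∈ A} = ∫ P{M ∈ A | h = u} d(Q ∘ h⁻¹)(u)`: the tilted ensemble is a mixture of the
conditioned (microcanonical-type) ensembles of the prior.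
-/

open MeasureTheory Set ProbabilityTheory
open scoped ENNReal

theorem tilted_measure_is_mixture_of_conditioned_prior
    {Ω : Type*} [MeasurableSpace Ω] [StandardBorelSpace Ω] [Nonempty Ω] {d : ℕ}
    (P : Measure Ω) [IsProbabilityMeasure P]
    (h : Ω → ℝ) (hh : Measurable h)
    (g : ℝ → ℝ) (hg : Measurable g) (hgpos : ∀ u : ℝ, 0 < g u)
    (hnorm : ∫⁻ ω, ENNReal.ofReal (g (h ω)) ∂P = 1)
    (Q : Measure Ω) (hQ : Q = P.withDensity fun ω => ENNReal.ofReal (g (h ω)))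
    (κP κQ : Kernel ℝ Ω) [IsMarkovKernel κP] [IsMarkovKernel κQ]
    (hκP : ∀ (A : Set Ω) (B : Set ℝ), MeasurableSet A → MeasurableSet B →
      P (A ∩ h ⁻¹' B) = ∫⁻ u in B, κP u A ∂(P.map h))
    (hκQ : ∀ (A : Set Ω) (B : Set ℝ), MeasurableSet A → MeasurableSet B →
      Q (A ∩ h ⁻¹' B) = ∫⁻ u in B, κQ u A ∂(Q.map h)) :
    (∀ᵐ u ∂(Q.map h), κQ u = κP u) ∧
    ∀ (M : Ω → (Fin d → ℝ)), Measurable M → ∀ A : Set (Fin d → ℝ), MeasurableSet A →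
      Q {ω | M ω ∈ A} = ∫⁻ u, κP u {ω | M ω ∈ A} ∂(Q.map h) := by
  have hgm : Measurable fun u => ENNReal.ofReal (g u) := hg.ennreal_ofReal
  have hghm : Measurable fun ω => ENNReal.ofReal (g (h ω)) := hgm.comp hh
  haveI : IsProbabilityMeasure Q := by
    constructor
    rw [hQ, withDensity_apply _ MeasurableSet.univ, Measure.restrict_univ, hnorm]
  -- the law of h under Q is the density-tilted law of h under P
  have hmapQ : Q.map h = (P.map h).withDensity fun u => ENNReal.ofReal (g u) := by
    ext B hB
    rw [Measure.map_apply hh hB, hQ, withDensity_apply _ (hh hB),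
      withDensity_apply _ hB, ← setLIntegral_map hB hgm hh]
  -- the κP-disintegration of P, packaged as a measure identity
  have hPA : ∀ A : Set Ω, MeasurableSet A →
      Measure.map h (P.restrict A) = (P.map h).withDensity fun u => κP u A := by
    intro A hA
    ext B hB
    rw [Measure.map_apply hh hB, Measure.restrict_apply (hh hB), inter_comm,
      hκP A B hA hB, withDensity_apply _ hB]
  -- Q is also disintegrated by κP
  have hκP' : ∀ (A : Set Ω) (B : Set ℝ), MeasurableSet A → MeasurableSet B →
      Q (A ∩ h ⁻¹' B) = ∫⁻ u in B, κP u A ∂(Q.map h) := by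
    intro A B hA hB
    have hκA : Measurable fun u => κP u A := κP.measurable_coe hA
    have hrhs : ∫⁻ u in B, κP u A ∂(Q.map h)
        = ∫⁻ u in B, ENNReal.ofReal (g u) * κP u A ∂(P.map h) := by
      rw [hmapQ, restrict_withDensity hB,
        lintegral_withDensity_eq_lintegral_mul _ hgm hκA]
      rfl
    have hlhs : Q (A ∩ h ⁻¹' B)
        = ∫⁻ u in B, ENNReal.ofReal (g u) ∂(Measure.map h (P.restrict A)) := by
      rw [hQ, withDensity_apply _ (hA.inter (hh hB)), Set.inter_comm,
        ← Measure.restrict_restrict (hh hB), ← setLIntegral_map hB hgm hh]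
    rw [hlhs, hPA A hA, restrict_withDensity hB,
      lintegral_withDensity_eq_lintegral_mul _ hκA hgm, hrhs]
    refine setLIntegral_congr_fun hB (fun u _ => ?_)
    simp [mul_comm]
  -- uniqueness of disintegration via the joint law ρ = Q ∘ (h, id)⁻¹
  have mf : Measurable fun ω => (h ω, ω) := hh.prodMk measurable_id
  set ρ : Measure (ℝ × Ω) := Q.map fun ω => (h ω, ω) with hρdef
  haveI : IsProbabilityMeasure ρ := Measure.isProbabilityMeasure_map mf.aemeasurable
  have hfst : ρ.fst = Q.map h := Measure.fst_map_prodMk measurable_id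
  have hcomp : ∀ (κ : Kernel ℝ Ω), IsMarkovKernel κ →
      (∀ (A : Set Ω) (B : Set ℝ), MeasurableSet A → MeasurableSet B →
        Q (A ∩ h ⁻¹' B) = ∫⁻ u in B, κ u A ∂(Q.map h)) →
      ρ = ρ.fst ⊗ₘ κ := by
    intro κ hκmk hκ
    haveI := hκmk
    refine MeasureTheory.ext_of_generate_finite _ generateFrom_prod.symm isPiSystem_prod
      ?_ ?_
    · rintro s ⟨B, hB, A, hA, rfl⟩
      simp only [mem_setOf_eq] at hB hA
      rw [Measure.compProd_apply_prod hB hA, hfst, ← hκ A B hA hB,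
        hρdef, Measure.map_apply mf (hB.prod hA)]
      congr 1
      ext ω
      simp [mem_prod, and_comm]
    · rw [hfst]
      simp [Measure.map_apply hh MeasurableSet.univ]
  have hρQ : ρ = ρ.fst ⊗ₘ κQ := hcomp κQ inferInstance hκQ
  have hρP : ρ = ρ.fst ⊗ₘ κP := hcomp κP inferInstance hκP'
  have h1 : ∀ᵐ u ∂(Q.map h), κQ u = κP u := by
    have hQc := eq_condKernel_of_measure_eq_compProd κQ hρQ
    have hPc := eq_condKernel_of_measure_eq_compProd κP hρP
    rw [hfst] at hQc hPc
    filter_upwards [hQc, hPc] with u h1 h2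
    rw [h1, h2]
  refine ⟨h1, fun M hM A hA => ?_⟩
  have hset : {ω | M ω ∈ A} = M ⁻¹' A ∩ h ⁻¹' univ := by simp [preimage]
  rw [hset, hκQ (M ⁻¹' A) univ (hM hA) MeasurableSet.univ, Measure.restrict_univ]
  exact lintegral_congr_ae (h1.mono fun u hu => by simp [hu])
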